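/- Let F be a first-order sentence of a signature σ and let c be a list of distinct predicate and function constants of σ (the intensional constants). If F is in Clark normal form relative to c and F is tight on c, then for any interpretation I of σ that satisfies ∃x∃y(x ≠ y), I is a model of SM[F; c] if and only if I is a model of the completion of F relative to c. -/

import Mathlib

/-!
A deep embedding of (one-sorted) first-order logic with equality,
following the functional stable model semantics of
Bartholomew & Lee, used by the ASPMT / aspsmt2smt paper.
-/

namespace ASPMT

/-- A first-order signature: function symbols and predicate symbols with arities. -/
structure Signature where
  Func : Type
  Pred : Type
  funcAr : Func → ℕ
  predAr : Pred → ℕ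

variable {σ : Signature}

/-- First-order terms; variables are indexed by natural numbers. -/
inductive Term (σ : Signature) : Type
  | var : ℕ → Term σ
  | app : (f : σ.Func) → (Fin (σ.funcAr f) → Term σ) → Term σ

/-- First-order formulas (with equality). `¬F` is `F.imp falsum`. -/
inductive Formula (σ : Signature) : Type
  | falsum : Formula σ
  | eq : Term σ → Term σ → Formula σ
  | pred : (p : σ.Pred) → (Fin (σ.predAr p) → Term σ) → Formula σ
  | and : Formula σ → Formula σ → Formula σ
  | or : Formula σ → Formula σ → Formula σ
  | imp : Formula σ → Formula σ → Formula σ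
  | all : ℕ → Formula σ → Formula σ
  | ex : ℕ → Formula σ → Formula σ

/-- Negation, as an abbreviation. -/
def Formula.not (F : Formula σ) : Formula σ := F.imp .falsum

/-- An interpretation (structure) for the signature, with nonempty universe. -/
structure Interp (σ : Signature) where
  M : Type
  nonempty : Nonempty M
  funcI : (f : σ.Func) → (Fin (σ.funcAr f) → M) → M
  predI : (p : σ.Pred) → (Fin (σ.predAr p) → M) → Prop

/-- Updating a variable assignment at a variable. -/
def updAssign {α : Type} (ν : ℕ → α) (x : ℕ) (a : α) : ℕ → α :=
  fun y => if y = x then a else ν y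

/-- Evaluation of a term in an interpretation under a variable assignment. -/
def Term.eval (I : Interp σ) (ν : ℕ → I.M) : Term σ → I.M
  | .var x => ν x
  | .app f ts => I.funcI f fun i => (ts i).eval I ν

/-- Tarskian satisfaction. -/
def Formula.Sat (I : Interp σ) : (ν : ℕ → I.M) → Formula σ → Prop
  | _, .falsum => False
  | ν, .eq t u => t.eval I ν = u.eval I ν
  | ν, .pred p ts => I.predI p fun i => (ts i).eval I ν
  | ν, .and F G => F.Sat I ν ∧ G.Sat I ν
  | ν, .or F G => F.Sat I ν ∨ G.Sat I ν
  | ν, .imp F G => F.Sat I ν → G.Sat I ν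
  | ν, .all x F => ∀ a : I.M, F.Sat I (updAssign ν x a)
  | ν, .ex x F => ∃ a : I.M, F.Sat I (updAssign ν x a)

/-- Variables occurring in a term. -/
def Term.vars : Term σ → Set ℕ
  | .var x => {x}
  | .app _ ts => ⋃ i, (ts i).vars

/-- Free variables of a formula. -/
def Formula.fv : Formula σ → Set ℕ
  | .falsum => ∅
  | .eq t u => t.vars ∪ u.vars
  | .pred _ ts => ⋃ i, (ts i).vars
  | .and F G => F.fv ∪ G.fv
  | .or F G => F.fv ∪ G.fv
  | .imp F G => F.fv ∪ G.fv
  | .all x F => F.fv \ {x}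
  | .ex x F => F.fv \ {x}

end ASPMT

namespace ASPMT

variable {σ : Signature}

/-- An alternative interpretation `ĉ` of the intensional constants `c = (cp, cf)`:
it may reinterpret the symbols in `cp`/`cf` but must agree with `I` elsewhere. -/
structure Reinterp (I : Interp σ) (cp : Set σ.Pred) (cf : Set σ.Func) where
  funcI : (f : σ.Func) → (Fin (σ.funcAr f) → I.M) → I.M
  predI : (p : σ.Pred) → (Fin (σ.predAr p) → I.M) → Prop
  func_eq : ∀ f ∉ cf, funcI f = I.funcI f
  pred_eq : ∀ p ∉ cp, predI p = I.predI p

/-- The interpretation determined by a reinterpretation of intensional constants. -/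
def Reinterp.toInterp {I : Interp σ} {cp : Set σ.Pred} {cf : Set σ.Func}
    (J : Reinterp I cp cf) : Interp σ :=
  ⟨I.M, I.nonempty, J.funcI, J.predI⟩

/-- `ĉ < c`: the predicates of `ĉ` are pointwise at most those of `c`
(`ĉ^pred ≤ c^pred`), and `ĉ ≠ c`. -/
def Reinterp.lt {I : Interp σ} {cp : Set σ.Pred} {cf : Set σ.Func}
    (J : Reinterp I cp cf) : Prop :=
  (∀ p args, J.predI p args → I.predI p args) ∧
    ¬((∀ p, J.predI p = I.predI p) ∧ (∀ f, J.funcI f = I.funcI f))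

/-- Satisfaction of `F*(ĉ)`, where the second-order variables `ĉ` are interpreted
by the reinterpretation `J` (for atomic `F`, `F* = F′ ∧ F` where `F′` replaces all
intensional constants with the corresponding variables from `ĉ`). -/
def Formula.StarSat (I : Interp σ) {cp : Set σ.Pred} {cf : Set σ.Func}
    (J : Reinterp I cp cf) : (ν : ℕ → I.M) → Formula σ → Prop
  | _, .falsum => False
  | ν, .eq t u =>
      (t.eval J.toInterp ν = u.eval J.toInterp ν) ∧ (t.eval I ν = u.eval I ν)
  | ν, .pred p ts =>
      (J.predI p fun i => (ts i).eval J.toInterp ν) ∧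
        (I.predI p fun i => (ts i).eval I ν)
  | ν, .and F G => F.StarSat I J ν ∧ G.StarSat I J ν
  | ν, .or F G => F.StarSat I J ν ∨ G.StarSat I J ν
  | ν, .imp F G => (F.StarSat I J ν → G.StarSat I J ν) ∧ (F.Sat I ν → G.Sat I ν)
  | ν, .all x F => ∀ a : I.M, F.StarSat I J (updAssign ν x a)
  | ν, .ex x F => ∃ a : I.M, F.StarSat I J (updAssign ν x a)

/-- `I ⊨ SM[F; c]` where `c = (cp, cf)` is the list of intensional constants:
`I ⊨ F ∧ ¬∃ĉ(ĉ < c ∧ F*(ĉ))`.  A model of `SM[F; c]` is called a stable model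
of `F` relative to `c`. -/
def StableModel (I : Interp σ) (ν : ℕ → I.M) (F : Formula σ)
    (cp : Set σ.Pred) (cf : Set σ.Func) : Prop :=
  F.Sat I ν ∧ ¬∃ J : Reinterp I cp cf, J.lt ∧ F.StarSat I J ν

end ASPMT


namespace ASPMT

variable {σ : Signature}

/-- Truth `⊤ := ¬⊥`. -/
def verum : Formula σ := Formula.falsum.imp .falsum

/-- Conjunction of a finite list of formulas. -/
def bigAnd (l : List (Formula σ)) : Formula σ := l.foldr .and verum

/-- Disjunction of a finite list of formulas. -/
def bigOr (l : List (Formula σ)) : Formula σ := l.foldr .or .falsum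

/-- `∀ x₁ … xₙ F`. -/
def allN (xs : List ℕ) (F : Formula σ) : Formula σ := xs.foldr .all F

/-- `∃ x₁ … xₙ F`. -/
def exN (xs : List ℕ) (F : Formula σ) : Formula σ := xs.foldr .ex F

/-- `F ↔ G` as an abbreviation. -/
def Formula.iff (F G : Formula σ) : Formula σ := (F.imp G).and (G.imp F)

/-- Function symbols occurring in a term. -/
def Term.funcs : Term σ → Set σ.Func
  | .var _ => ∅
  | .app f ts => insert f (⋃ i, (ts i).funcs)

/-- Function symbols having a strictly positive occurrence in a formula
(an occurrence is strictly positive if it is not in the antecedent of any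
implication). -/
def Formula.spFuncs : Formula σ → Set σ.Func
  | .falsum => ∅
  | .eq t u => t.funcs ∪ u.funcs
  | .pred _ ts => ⋃ i, (ts i).funcs
  | .and F G => F.spFuncs ∪ G.spFuncs
  | .or F G => F.spFuncs ∪ G.spFuncs
  | .imp _ G => G.spFuncs
  | .all _ F => F.spFuncs
  | .ex _ F => F.spFuncs

/-- Predicate symbols having a strictly positive occurrence in a formula. -/
def Formula.spPreds : Formula σ → Set σ.Pred
  | .falsum => ∅
  | .eq _ _ => ∅
  | .pred p _ => {p}
  | .and F G => F.spPreds ∪ G.spPreds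
  | .or F G => F.spPreds ∪ G.spPreds
  | .imp _ G => G.spPreds
  | .all _ F => F.spPreds
  | .ex _ F => F.spPreds

/-- The implications `G → H` having a strictly positive occurrence in a formula. -/
def Formula.spImps : Formula σ → Set (Formula σ × Formula σ)
  | .falsum => ∅
  | .eq _ _ => ∅
  | .pred _ _ => ∅
  | .and F G => F.spImps ∪ G.spImps
  | .or F G => F.spImps ∪ G.spImps
  | .imp F G => insert (F, G) G.spImps
  | .all _ F => F.spImps
  | .ex _ F => F.spImps

/-- A constant (predicate or function symbol) has a strictly positive occurrence
in a formula. -/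
def spIn (s : σ.Pred ⊕ σ.Func) (F : Formula σ) : Prop :=
  match s with
  | .inl p => p ∈ F.spPreds
  | .inr f => f ∈ F.spFuncs

/-- Membership of a constant in the list `c = (cp, cf)` of intensional constants. -/
def intensional (cp : Set σ.Pred) (cf : Set σ.Func) : σ.Pred ⊕ σ.Func → Prop
  | .inl p => p ∈ cp
  | .inr f => f ∈ cf

/-- The dependency graph of `F` relative to `c`: its vertices are the members of
`c`, and it has an edge from `c` to `d` if for some strictly positive occurrence
of `G → H` in `F`, `c` has a strictly positive occurrence in `H` and `d` has a
strictly positive occurrence in `G`. -/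
def depEdge (F : Formula σ) (cp : Set σ.Pred) (cf : Set σ.Func)
    (s d : σ.Pred ⊕ σ.Func) : Prop :=
  intensional cp cf s ∧ intensional cp cf d ∧
    ∃ GH ∈ F.spImps, spIn s GH.2 ∧ spIn d GH.1

/-- `F` is tight on `c` if the dependency graph of `F` relative to `c` is acyclic. -/
def Tight (F : Formula σ) (cp : Set σ.Pred) (cf : Set σ.Func) : Prop :=
  ∀ s, ¬ Relation.TransGen (depEdge F cp cf) s s

/-- A formula in Clark normal form relative to the list `c` of distinct intensional
constants `cps ++ cfs`: a conjunction of sentences `∀x(G → p(x))`, one for each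
intensional predicate `p`; `∀x y(G → f(x) = y)`, one for each intensional function
`f`; and constraints `← G`.  The object variables `x` (and `y`) are represented by
the variables `0, …, n-1` (and `n`), and `G` has no free variables other than
those in `x` (and `y`). -/
structure ClarkProgram (σ : Signature) where
  cps : List σ.Pred
  cfs : List σ.Func
  cps_nodup : cps.Nodup
  cfs_nodup : cfs.Nodup
  predDef : σ.Pred → Formula σ
  funcDef : σ.Func → Formula σ
  constraints : List (Formula σ)
  predDef_fv : ∀ p ∈ cps, (predDef p).fv ⊆ {i | i < σ.predAr p}
  funcDef_fv : ∀ f ∈ cfs, (funcDef f).fv ⊆ {i | i < σ.funcAr f + 1}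
  constraints_fv : ∀ G ∈ constraints, G.fv = ∅

/-- The conjunctive term `∀x(G → p(x))` for an intensional predicate `p`. -/
def predRule (P : ClarkProgram σ) (p : σ.Pred) : Formula σ :=
  allN (List.range (σ.predAr p))
    ((P.predDef p).imp (.pred p fun i => .var i.1))

/-- The conjunctive term `∀x y(G → f(x) = y)` for an intensional function `f`. -/
def funcRule (P : ClarkProgram σ) (f : σ.Func) : Formula σ :=
  allN (List.range (σ.funcAr f + 1))
    ((P.funcDef f).imp (.eq (.app f fun i => .var i.1) (.var (σ.funcAr f))))

/-- The formula `F` in Clark normal form determined by a Clark program. -/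
def ClarkProgram.formula (P : ClarkProgram σ) : Formula σ :=
  bigAnd (P.cps.map (predRule P) ++ P.cfs.map (funcRule P) ++
    P.constraints.map fun G => G.imp .falsum)

/-- The conjunctive term `∀x(p(x) ↔ G)` of the completion. -/
def predComp (P : ClarkProgram σ) (p : σ.Pred) : Formula σ :=
  allN (List.range (σ.predAr p))
    ((Formula.pred p fun i => .var i.1).iff (P.predDef p))

/-- The conjunctive term `∀x y(f(x) = y ↔ G)` of the completion. -/
def funcComp (P : ClarkProgram σ) (f : σ.Func) : Formula σ :=
  allN (List.range (σ.funcAr f + 1))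
    ((Formula.eq (.app f fun i => .var i.1) (.var (σ.funcAr f))).iff (P.funcDef f))

/-- The completion of `F` relative to `c`: each `∀x(G → p(x))` is replaced by
`∀x(p(x) ↔ G)`, each `∀x y(G → f(x) = y)` by `∀x y(f(x) = y ↔ G)`, and each
constraint `← G` by `¬G`. -/
def ClarkProgram.completion (P : ClarkProgram σ) : Formula σ :=
  bigAnd (P.cps.map (predComp P) ++ P.cfs.map (funcComp P) ++
    P.constraints.map Formula.not)

end ASPMT

namespace ASPMT

variable {σ : Signature}

theorem Term.eval_congr (I : Interp σ) {ν ν' : ℕ → I.M} :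
    ∀ (t : Term σ), (∀ x ∈ t.vars, ν x = ν' x) → t.eval I ν = t.eval I ν'
  | .var x, h => h x (by simp [Term.vars])
  | .app f ts, h => by
      simp only [Term.eval]
      congr 1; funext i
      exact Term.eval_congr I (ts i) fun x hx =>
        h x (by simp only [Term.vars, Set.mem_iUnion]; exact ⟨i, hx⟩)

theorem Formula.sat_congr (I : Interp σ) :
    ∀ (F : Formula σ) (ν ν' : ℕ → I.M), (∀ x ∈ F.fv, ν x = ν' x) →
      (F.Sat I ν ↔ F.Sat I ν')
  | .falsum, ν, ν', h => Iff.rfl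
  | .eq t u, ν, ν', h => by
      simp only [Formula.Sat]
      rw [Term.eval_congr I t fun x hx => h x (Or.inl hx),
          Term.eval_congr I u fun x hx => h x (Or.inr hx)]
  | .pred p ts, ν, ν', h => by
      simp only [Formula.Sat]
      have : (fun i => (ts i).eval I ν) = fun i => (ts i).eval I ν' := by
        funext i
        exact Term.eval_congr I (ts i) fun x hx =>
          h x (by simp only [Formula.fv, Set.mem_iUnion]; exact ⟨i, hx⟩)
      rw [this]
  | .and F G, ν, ν', h => by
      simp only [Formula.Sat]
      rw [Formula.sat_congr I F ν ν' fun x hx => h x (Or.inl hx),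
          Formula.sat_congr I G ν ν' fun x hx => h x (Or.inr hx)]
  | .or F G, ν, ν', h => by
      simp only [Formula.Sat]
      rw [Formula.sat_congr I F ν ν' fun x hx => h x (Or.inl hx),
          Formula.sat_congr I G ν ν' fun x hx => h x (Or.inr hx)]
  | .imp F G, ν, ν', h => by
      simp only [Formula.Sat]
      rw [Formula.sat_congr I F ν ν' fun x hx => h x (Or.inl hx),
          Formula.sat_congr I G ν ν' fun x hx => h x (Or.inr hx)]
  | .all x F, ν, ν', h => by
      simp only [Formula.Sat]
      exact forall_congr' fun a => Formula.sat_congr I F _ _ fun y hy => by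
        by_cases hxy : y = x <;> simp [updAssign, hxy]
        exact h y ⟨hy, hxy⟩
  | .ex x F, ν, ν', h => by
      simp only [Formula.Sat]
      exact exists_congr fun a => Formula.sat_congr I F _ _ fun y hy => by
        by_cases hxy : y = x <;> simp [updAssign, hxy]
        exact h y ⟨hy, hxy⟩

theorem Formula.StarSat.sat {I : Interp σ} {cp : Set σ.Pred} {cf : Set σ.Func}
    {J : Reinterp I cp cf} :
    ∀ {F : Formula σ} {ν : ℕ → I.M}, F.StarSat I J ν → F.Sat I ν
  | .falsum, ν, h => h
  | .eq t u, ν, h => h.2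
  | .pred p ts, ν, h => h.2
  | .and F G, ν, h => ⟨h.1.sat, h.2.sat⟩
  | .or F G, ν, h => h.imp (·.sat) (·.sat)
  | .imp F G, ν, h => h.2
  | .all x F, ν, h => fun a => (h a).sat
  | .ex x F, ν, h => h.imp fun _ h => h.sat

theorem Term.eval_toInterp {I : Interp σ} {cp : Set σ.Pred} {cf : Set σ.Func}
    (J : Reinterp I cp cf) {ν : ℕ → I.M} :
    ∀ (t : Term σ), (∀ f ∈ t.funcs, J.funcI f = I.funcI f) →
      t.eval J.toInterp ν = t.eval I ν
  | .var x, _ => rfl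
  | .app f ts, h => by
      simp only [Term.eval]
      have hf : J.funcI f = I.funcI f := h f (by simp [Term.funcs])
      show J.toInterp.funcI f _ = _
      rw [show J.toInterp.funcI = J.funcI from rfl, hf]
      congr 1; funext i
      exact Term.eval_toInterp J (ts i) fun g hg =>
        h g (by simp only [Term.funcs, Set.mem_insert_iff, Set.mem_iUnion]; exact Or.inr ⟨i, hg⟩)

/-- If `J` agrees with `I` on all symbols occurring strictly positively in `F`,
then satisfaction of `F` implies satisfaction of `F*`. -/
theorem Formula.sat_starSat {I : Interp σ} {cp : Set σ.Pred} {cf : Set σ.Func}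
    {J : Reinterp I cp cf} :
    ∀ (F : Formula σ) (ν : ℕ → I.M),
      (∀ p ∈ F.spPreds, J.predI p = I.predI p) →
      (∀ f ∈ F.spFuncs, J.funcI f = I.funcI f) →
      F.Sat I ν → F.StarSat I J ν
  | .falsum, ν, _, _, h => h
  | .eq t u, ν, _, hf, h => by
      refine ⟨?_, h⟩
      rw [Term.eval_toInterp J t fun g hg => hf g (Or.inl hg),
          Term.eval_toInterp J u fun g hg => hf g (Or.inr hg)]
      exact h
  | .pred p ts, ν, hp, hf, h => by
      have harg : (fun i => (ts i).eval J.toInterp ν) = fun i => (ts i).eval I ν := by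
        funext i
        exact Term.eval_toInterp J (ts i) fun g hg =>
          hf g (by simp only [Formula.spFuncs, Set.mem_iUnion]; exact ⟨i, hg⟩)
      refine ⟨?_, h⟩
      rw [harg, hp p (by simp [Formula.spPreds])]
      exact h
  | .and F G, ν, hp, hf, h =>
      ⟨Formula.sat_starSat F ν (fun p h' => hp p (Or.inl h')) (fun f h' => hf f (Or.inl h')) h.1,
       Formula.sat_starSat G ν (fun p h' => hp p (Or.inr h')) (fun f h' => hf f (Or.inr h')) h.2⟩
  | .or F G, ν, hp, hf, h =>
      h.imp (Formula.sat_starSat F ν (fun p h' => hp p (Or.inl h')) (fun f h' => hf f (Or.inl h')))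
            (Formula.sat_starSat G ν (fun p h' => hp p (Or.inr h')) (fun f h' => hf f (Or.inr h')))
  | .imp F G, ν, hp, hf, h =>
      ⟨fun hs => Formula.sat_starSat G ν hp hf (h hs.sat), h⟩
  | .all x F, ν, hp, hf, h => fun a => Formula.sat_starSat F _ hp hf (h a)
  | .ex x F, ν, hp, hf, h => h.imp fun a => Formula.sat_starSat F _ hp hf

theorem sat_bigAnd {I : Interp σ} {ν : ℕ → I.M} {l : List (Formula σ)} :
    (bigAnd l).Sat I ν ↔ ∀ G ∈ l, G.Sat I ν := by
  induction l with
  | nil => simp [bigAnd, verum, Formula.Sat]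
  | cons G l ih =>
    show (G.Sat I ν ∧ (bigAnd l).Sat I ν) ↔ _
    rw [ih]; simp

theorem starSat_bigAnd {I : Interp σ} {cp : Set σ.Pred} {cf : Set σ.Func}
    {J : Reinterp I cp cf} {ν : ℕ → I.M} {l : List (Formula σ)} :
    (bigAnd l).StarSat I J ν ↔ ∀ G ∈ l, G.StarSat I J ν := by
  induction l with
  | nil => simp [bigAnd, verum, Formula.StarSat, Formula.Sat]
  | cons G l ih =>
    show (G.StarSat I J ν ∧ (bigAnd l).StarSat I J ν) ↔ _
    rw [ih]; simp

theorem sat_allN {I : Interp σ} {xs : List ℕ} :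
    ∀ {ν : ℕ → I.M} {F : Formula σ},
    (allN xs F).Sat I ν ↔ ∀ ν' : ℕ → I.M, (∀ y ∉ xs, ν' y = ν y) → F.Sat I ν' := by
  induction xs with
  | nil =>
    intro ν F
    simp only [allN, List.foldr]
    constructor
    · intro h ν' h'
      exact (Formula.sat_congr I F ν ν' fun x _ => (h' x (List.not_mem_nil (a := x))).symm).mp h
    · intro h; exact h ν fun _ _ => rfl
  | cons x xs ih =>
    intro ν F
    simp only [allN, List.foldr] at ih ⊢
    show (∀ a, (allN xs F).Sat I (updAssign ν x a)) ↔ _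
    constructor
    · intro h ν' h'
      refine (ih.mp (h (ν' x))) ν' fun y hy => ?_
      by_cases hxy : y = x <;> simp [updAssign, hxy]
      exact h' y (by simp [hxy, hy])
    · intro h a
      refine ih.mpr fun ν' h' => h ν' fun y hy => ?_
      have hyx : y ≠ x := fun e => hy (by simp [e])
      have := h' y (fun e => hy (by simp [e]))
      simpa [updAssign, hyx] using this

theorem starSat_allN {I : Interp σ} {cp : Set σ.Pred} {cf : Set σ.Func}
    {J : Reinterp I cp cf} {xs : List ℕ} :
    ∀ {ν : ℕ → I.M} {F : Formula σ},
    (allN xs F).StarSat I J ν ↔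
      ∀ ν' : ℕ → I.M, (∀ y ∉ xs, ν' y = ν y) → F.StarSat I J ν' := by
  induction xs with
  | nil =>
    intro ν F
    simp only [allN, List.foldr]
    constructor
    · intro h ν' h'
      have : ν = ν' := funext fun x => (h' x (List.not_mem_nil (a := x))).symm
      exact this ▸ h
    · intro h; exact h ν fun _ _ => rfl
  | cons x xs ih =>
    intro ν F
    simp only [allN, List.foldr] at ih ⊢
    show (∀ a, (allN xs F).StarSat I J (updAssign ν x a)) ↔ _
    constructor
    · intro h ν' h'
      refine (ih.mp (h (ν' x))) ν' fun y hy => ?_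
      by_cases hxy : y = x <;> simp [updAssign, hxy]
      exact h' y (by simp [hxy, hy])
    · intro h a
      refine ih.mpr fun ν' h' => h ν' fun y hy => ?_
      have hyx : y ≠ x := fun e => hy (by simp [e])
      have := h' y (fun e => hy (by simp [e]))
      simpa [updAssign, hyx] using this

theorem spImps_allN {F : Formula σ} : ∀ {xs : List ℕ}, (allN xs F).spImps = F.spImps
  | [] => rfl
  | _ :: xs => by
    show (Formula.all _ (allN xs F)).spImps = _
    rw [show (Formula.all _ (allN xs F)).spImps = (allN xs F).spImps from rfl,
        spImps_allN]

theorem spImps_bigAnd_subset {l : List (Formula σ)} {G : Formula σ} (h : G ∈ l) :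
    G.spImps ⊆ (bigAnd l).spImps := by
  induction l with
  | nil => simp at h
  | cons H l ih =>
    rcases List.mem_cons.mp h with h | h
    · subst h; exact fun x hx => Or.inl hx
    · exact fun x hx => Or.inr (ih h hx)

/-- Assignment overriding `ν` on `0, …, n-1` by `args`. -/
def setArgs {M : Type} (ν : ℕ → M) (n : ℕ) (args : Fin n → M) : ℕ → M :=
  fun k => if h : k < n then args ⟨k, h⟩ else ν k

theorem setArgs_not_mem {M : Type} (ν : ℕ → M) (n : ℕ) (args : Fin n → M) :
    ∀ y ∉ List.range n, setArgs ν n args y = ν y := by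
  intro y hy
  simp only [List.mem_range] at hy
  simp [setArgs, hy]

theorem setArgs_fin {M : Type} (ν : ℕ → M) (n : ℕ) (args : Fin n → M) :
    (fun i : Fin n => setArgs ν n args i.1) = args := by
  funext i; simp [setArgs, i.2]

/-- Assignment overriding `ν` on `0, …, n-1` by `args` and at `n` by `y`. -/
def setArgs2 {M : Type} (ν : ℕ → M) (n : ℕ) (args : Fin n → M) (y : M) : ℕ → M :=
  fun k => if h : k < n then args ⟨k, h⟩ else if k = n then y else ν k

theorem setArgs2_not_mem {M : Type} (ν : ℕ → M) (n : ℕ) (args : Fin n → M) (y : M) :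
    ∀ k ∉ List.range (n + 1), setArgs2 ν n args y k = ν k := by
  intro k hk
  simp only [List.mem_range] at hk
  have h1 : ¬ k < n := fun h => hk (h.trans (Nat.lt_succ_self n))
  have h2 : k ≠ n := fun h => hk (h ▸ Nat.lt_succ_self n)
  simp [setArgs2, h1, h2]

theorem setArgs2_fin {M : Type} (ν : ℕ → M) (n : ℕ) (args : Fin n → M) (y : M) :
    (fun i : Fin n => setArgs2 ν n args y i.1) = args := by
  funext i; simp [setArgs2, i.2]

theorem setArgs2_last {M : Type} (ν : ℕ → M) (n : ℕ) (args : Fin n → M) (y : M) :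
    setArgs2 ν n args y n = y := by
  simp [setArgs2]

/-- A finite set with an acyclic relation has a member with no edge into the set. -/
theorem exists_min_of_acyclic {α : Type} {r : α → α → Prop} {D : Set α}
    (hfin : D.Finite) (hne : D.Nonempty) (hk : ∀ a, ¬ Relation.TransGen r a a) :
    ∃ m ∈ D, ∀ x ∈ D, ¬ r m x := by
  haveI := hfin.to_subtype
  let r' : D → D → Prop := fun a b => Relation.TransGen r (b : α) (a : α)
  haveI : IsTrans D r' := ⟨fun a b c h1 h2 => h2.trans h1⟩
  haveI : IsIrrefl D r' := ⟨fun a h => hk a h⟩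
  have wf := Finite.wellFounded_of_trans_of_irrefl r'
  obtain ⟨d, hd⟩ := hne
  obtain ⟨m, -, hm⟩ := wf.has_min Set.univ ⟨⟨d, hd⟩, trivial⟩
  exact ⟨m, m.2, fun x hx hrx => hm ⟨x, hx⟩ trivial (Relation.TransGen.single hrx)⟩


/-- Theorem on Completion: Let `F` be a first-order sentence of a
signature `σ` and let `c` be a list of distinct predicate and function constants of
`σ` (the intensional constants).  If `F` is in Clark normal form relative to `c`
and `F` is tight on `c`, then for any interpretation `I` of `σ` that satisfies
`∃x∃y(x ≠ y)`, `I` is a model of `SM[F; c]` if and only if `I` is a model of the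
completion of `F` relative to `c`. -/
theorem completion_theorem {σ : Signature} (P : ClarkProgram σ)
    (htight : Tight P.formula {p | p ∈ P.cps} {f | f ∈ P.cfs})
    (I : Interp σ) (hI : ∃ a b : I.M, a ≠ b) (ν : ℕ → I.M) :
    StableModel I ν P.formula {p | p ∈ P.cps} {f | f ∈ P.cfs} ↔
      P.completion.Sat I ν := by
  classical
  constructor
  · rintro ⟨hF, hmin⟩
    have hFall := sat_bigAnd.mp (show (bigAnd _).Sat I ν from hF)
    have hruleP : ∀ p ∈ P.cps, ∀ ν' : ℕ → I.M,
        (∀ y ∉ List.range (σ.predAr p), ν' y = ν y) →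
        ((P.predDef p).Sat I ν' → I.predI p fun i => ν' i.1) := by
      intro p hp ν' hν' hG
      have h1 := hFall _ (List.mem_append_left _
        (List.mem_append_left _ (List.mem_map_of_mem hp)))
      rw [predRule, sat_allN] at h1
      exact h1 ν' hν' hG
    have hruleF : ∀ f ∈ P.cfs, ∀ ν' : ℕ → I.M,
        (∀ y ∉ List.range (σ.funcAr f + 1), ν' y = ν y) →
        ((P.funcDef f).Sat I ν' → I.funcI f (fun i => ν' i.1) = ν' (σ.funcAr f)) := by
      intro f hf ν' hν' hG
      have h1 := hFall _ (List.mem_append_left _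
        (List.mem_append_right _ (List.mem_map_of_mem hf)))
      rw [funcRule, sat_allN] at h1
      exact h1 ν' hν' hG
    have hruleC : ∀ c ∈ P.constraints, ¬ c.Sat I ν := by
      intro c hc
      exact hFall _ (List.mem_append_right _ (List.mem_map_of_mem hc))
    rw [ClarkProgram.completion, sat_bigAnd]
    intro C hC
    rcases List.mem_append.mp hC with hC | hC
    · rcases List.mem_append.mp hC with hC | hC
      · -- predicate completion conjunct
        obtain ⟨p, hp, rfl⟩ := List.mem_map.mp hC
        rw [predComp, sat_allN]
        intro ν' hν'
        refine ⟨?_, fun hG => hruleP p hp ν' hν' hG⟩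
        intro hpred
        by_contra hG
        apply hmin
        refine ⟨⟨I.funcI,
          Function.update I.predI p
            (fun a => I.predI p a ∧ a ≠ fun i : Fin (σ.predAr p) => ν' i.1),
          fun _ _ => rfl,
          fun q hq => Function.update_of_ne (fun e => hq (by rw [e]; exact hp)) _ _⟩,
          ⟨?_, ?_⟩, ?_⟩
        · -- J ≤ I on predicates
          intro q args hq
          have hq' : Function.update I.predI p
              (fun a => I.predI p a ∧ a ≠ fun i : Fin (σ.predAr p) => ν' i.1) q args := hq
          by_cases hqp : q = p
          · subst hqp
            rw [Function.update_self] at hq'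
            exact hq'.1
          · rwa [Function.update_of_ne hqp] at hq'
        · -- J ≠ I
          rintro ⟨hpeq, -⟩
          have h2 : Function.update I.predI p
              (fun a => I.predI p a ∧ a ≠ fun i : Fin (σ.predAr p) => ν' i.1) p
              = I.predI p := hpeq p
          rw [Function.update_self] at h2
          have h4 := congrFun h2 (fun i : Fin (σ.predAr p) => ν' i.1)
          have h3 : I.predI p (fun i : Fin (σ.predAr p) => ν' i.1) ∧
              (fun i : Fin (σ.predAr p) => ν' i.1) ≠ (fun i : Fin (σ.predAr p) => ν' i.1) :=
            (iff_of_eq h4).mpr hpred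
          exact h3.2 rfl
        · -- StarSat
          rw [ClarkProgram.formula, starSat_bigAnd]
          intro C hC
          rcases List.mem_append.mp hC with hC | hC
          · rcases List.mem_append.mp hC with hC | hC
            · obtain ⟨q, hq, rfl⟩ := List.mem_map.mp hC
              rw [predRule, starSat_allN]
              intro ν'' hν''
              refine ⟨?_, fun hG' => hruleP q hq ν'' hν'' hG'⟩
              intro hs
              have hIq : I.predI q (fun i => ν'' i.1) := hruleP q hq ν'' hν'' hs.sat
              refine ⟨?_, hIq⟩
              show Function.update I.predI p
                (fun a => I.predI p a ∧ a ≠ fun i : Fin (σ.predAr p) => ν' i.1)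
                q (fun i => ν'' i.1)
              by_cases hqp : q = p
              · subst hqp
                rw [Function.update_self]
                refine ⟨hIq, fun hva => hG ?_⟩
                refine (Formula.sat_congr I _ ν'' ν' ?_).mp hs.sat
                intro x hx
                have hxlt : x < σ.predAr q := P.predDef_fv q hq hx
                exact congrFun hva ⟨x, hxlt⟩
              · rw [Function.update_of_ne hqp]
                exact hIq
            · obtain ⟨g, hg, rfl⟩ := List.mem_map.mp hC
              rw [funcRule, starSat_allN]
              intro ν'' hν''
              refine ⟨?_, fun hG' => hruleF g hg ν'' hν'' hG'⟩
              intro hs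
              have hIg := hruleF g hg ν'' hν'' hs.sat
              exact ⟨hIg, hIg⟩
          · obtain ⟨c, hc, rfl⟩ := List.mem_map.mp hC
            exact ⟨fun hs => absurd hs.sat (hruleC c hc), hruleC c hc⟩
      · -- function completion conjunct
        obtain ⟨f, hf, rfl⟩ := List.mem_map.mp hC
        rw [funcComp, sat_allN]
        intro ν' hν'
        refine ⟨?_, fun hG => hruleF f hf ν' hν' hG⟩
        intro heq
        have heq' : I.funcI f (fun i : Fin (σ.funcAr f) => ν' i.1) = ν' (σ.funcAr f) := heq
        by_contra hG
        obtain ⟨a, b, hab⟩ := hI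
        obtain ⟨z, hz⟩ : ∃ z : I.M, z ≠ ν' (σ.funcAr f) := by
          rcases eq_or_ne (ν' (σ.funcAr f)) a with h | h
          · exact ⟨b, by rw [h]; exact fun e => hab e.symm⟩
          · exact ⟨a, fun e => h e.symm⟩
        apply hmin
        refine ⟨⟨Function.update I.funcI f
            (fun args => if args = (fun i : Fin (σ.funcAr f) => ν' i.1) then z
              else I.funcI f args),
          I.predI,
          fun g hgf => Function.update_of_ne (fun e => hgf (by rw [e]; exact hf)) _ _,
          fun _ _ => rfl⟩,
          ⟨fun q args h => h, ?_⟩, ?_⟩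
        · -- J ≠ I
          rintro ⟨-, hfeq⟩
          have h2 : Function.update I.funcI f
              (fun args => if args = (fun i : Fin (σ.funcAr f) => ν' i.1) then z
                else I.funcI f args) f = I.funcI f := hfeq f
          rw [Function.update_self] at h2
          have h4 := congrFun h2 (fun i : Fin (σ.funcAr f) => ν' i.1)
          simp only [if_pos rfl] at h4
          exact hz (h4.trans heq')
        · -- StarSat
          rw [ClarkProgram.formula, starSat_bigAnd]
          intro C hC
          rcases List.mem_append.mp hC with hC | hC
          · rcases List.mem_append.mp hC with hC | hC
            · obtain ⟨q, hq, rfl⟩ := List.mem_map.mp hC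
              rw [predRule, starSat_allN]
              intro ν'' hν''
              refine ⟨?_, fun hG' => hruleP q hq ν'' hν'' hG'⟩
              intro hs
              have hIq : I.predI q (fun i => ν'' i.1) := hruleP q hq ν'' hν'' hs.sat
              exact ⟨hIq, hIq⟩
            · obtain ⟨g, hg, rfl⟩ := List.mem_map.mp hC
              rw [funcRule, starSat_allN]
              intro ν'' hν''
              refine ⟨?_, fun hG' => hruleF g hg ν'' hν'' hG'⟩
              intro hs
              have hIg : I.funcI g (fun i => ν'' i.1) = ν'' (σ.funcAr g) :=
                hruleF g hg ν'' hν'' hs.sat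
              refine ⟨?_, hIg⟩
              show Function.update I.funcI f
                (fun args => if args = (fun i : Fin (σ.funcAr f) => ν' i.1) then z
                  else I.funcI f args) g (fun i => ν'' i.1) = ν'' (σ.funcAr g)
              by_cases hgf : g = f
              · subst hgf
                rw [Function.update_self]
                by_cases hva : (fun i : Fin (σ.funcAr g) => ν'' i.1)
                    = (fun i : Fin (σ.funcAr g) => ν' i.1)
                · exfalso
                  have h5 : I.funcI g (fun i : Fin (σ.funcAr g) => ν' i.1)
                      = ν'' (σ.funcAr g) := by rw [← hva]; exact hIg
                  apply hG
                  refine (Formula.sat_congr I _ ν'' ν' ?_).mp hs.sat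
                  intro x hx
                  have hxlt : x < σ.funcAr g + 1 := P.funcDef_fv g hg hx
                  rcases Nat.lt_succ_iff_lt_or_eq.mp hxlt with h | h
                  · exact congrFun hva ⟨x, h⟩
                  · rw [h]; exact h5.symm.trans heq'
                · rw [if_neg hva]; exact hIg
              · rw [Function.update_of_ne hgf]
                exact hIg
          · obtain ⟨c, hc, rfl⟩ := List.mem_map.mp hC
            exact ⟨fun hs => absurd hs.sat (hruleC c hc), hruleC c hc⟩
    · -- constraint conjunct
      obtain ⟨c, hc, rfl⟩ := List.mem_map.mp hC
      exact hruleC c hc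
  · -- completion implies stable model
    intro hComp
    have hCall := sat_bigAnd.mp (show (bigAnd _).Sat I ν from hComp)
    have hCompP : ∀ p ∈ P.cps, ∀ ν' : ℕ → I.M,
        (∀ y ∉ List.range (σ.predAr p), ν' y = ν y) →
        ((I.predI p fun i => ν' i.1) ↔ (P.predDef p).Sat I ν') := by
      intro p hp ν' hν'
      have h1 := hCall _ (List.mem_append_left _
        (List.mem_append_left _ (List.mem_map_of_mem hp)))
      rw [predComp, sat_allN] at h1
      exact ⟨(h1 ν' hν').1, (h1 ν' hν').2⟩
    have hCompF : ∀ f ∈ P.cfs, ∀ ν' : ℕ → I.M,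
        (∀ y ∉ List.range (σ.funcAr f + 1), ν' y = ν y) →
        ((I.funcI f fun i => ν' i.1) = ν' (σ.funcAr f) ↔ (P.funcDef f).Sat I ν') := by
      intro f hf ν' hν'
      have h1 := hCall _ (List.mem_append_left _
        (List.mem_append_right _ (List.mem_map_of_mem hf)))
      rw [funcComp, sat_allN] at h1
      exact ⟨(h1 ν' hν').1, (h1 ν' hν').2⟩
    have hCompC : ∀ c ∈ P.constraints, ¬ c.Sat I ν := by
      intro c hc
      exact hCall _ (List.mem_append_right _ (List.mem_map_of_mem hc))
    refine ⟨?_, ?_⟩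
    · -- F is satisfied
      rw [ClarkProgram.formula, sat_bigAnd]
      intro C hC
      rcases List.mem_append.mp hC with hC | hC
      · rcases List.mem_append.mp hC with hC | hC
        · obtain ⟨p, hp, rfl⟩ := List.mem_map.mp hC
          rw [predRule, sat_allN]
          intro ν' hν'
          exact fun hG => (hCompP p hp ν' hν').mpr hG
        · obtain ⟨f, hf, rfl⟩ := List.mem_map.mp hC
          rw [funcRule, sat_allN]
          intro ν' hν'
          exact fun hG => (hCompF f hf ν' hν').mpr hG
      · obtain ⟨c, hc, rfl⟩ := List.mem_map.mp hC
        exact hCompC c hc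
    · -- no smaller reinterpretation satisfies F*
      rintro ⟨J, ⟨hle, hne⟩, hstar⟩
      have hstarAll := starSat_bigAnd.mp (show (bigAnd _).StarSat I J ν from hstar)
      have hstarP : ∀ p ∈ P.cps, ∀ ν' : ℕ → I.M,
          (∀ y ∉ List.range (σ.predAr p), ν' y = ν y) →
          (P.predDef p).StarSat I J ν' → J.predI p fun i => ν' i.1 := by
        intro p hp ν' hν' hs
        have h1 := hstarAll _ (List.mem_append_left _
          (List.mem_append_left _ (List.mem_map_of_mem hp)))
        rw [predRule, starSat_allN] at h1
        exact ((h1 ν' hν').1 hs).1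
      have hstarF : ∀ f ∈ P.cfs, ∀ ν' : ℕ → I.M,
          (∀ y ∉ List.range (σ.funcAr f + 1), ν' y = ν y) →
          (P.funcDef f).StarSat I J ν' →
            (J.funcI f fun i => ν' i.1) = ν' (σ.funcAr f) := by
        intro f hf ν' hν' hs
        have h1 := hstarAll _ (List.mem_append_left _
          (List.mem_append_right _ (List.mem_map_of_mem hf)))
        rw [funcRule, starSat_allN] at h1
        exact ((h1 ν' hν').1 hs).1
      -- the set of intensional symbols where J and I disagree
      have hfin : {s : σ.Pred ⊕ σ.Func | Sum.elim
          (fun p => p ∈ P.cps ∧ J.predI p ≠ I.predI p)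
          (fun f => f ∈ P.cfs ∧ J.funcI f ≠ I.funcI f) s}.Finite := by
        apply Set.Finite.subset
          ((P.cps.finite_toSet.image Sum.inl).union (P.cfs.finite_toSet.image Sum.inr))
        rintro (p | f) hs
        · exact Or.inl ⟨p, hs.1, rfl⟩
        · exact Or.inr ⟨f, hs.1, rfl⟩
      have hne' : {s : σ.Pred ⊕ σ.Func | Sum.elim
          (fun p => p ∈ P.cps ∧ J.predI p ≠ I.predI p)
          (fun f => f ∈ P.cfs ∧ J.funcI f ≠ I.funcI f) s}.Nonempty := by
        by_cases hA : ∀ p, J.predI p = I.predI p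
        · have hB : ¬ ∀ f, J.funcI f = I.funcI f := fun h => hne ⟨hA, h⟩
          push_neg at hB
          obtain ⟨f, hf⟩ := hB
          have hfc : f ∈ P.cfs := by
            by_contra h
            exact hf (J.func_eq f h)
          exact ⟨Sum.inr f, hfc, hf⟩
        · push_neg at hA
          obtain ⟨p, hp2⟩ := hA
          have hpc : p ∈ P.cps := by
            by_contra h
            exact hp2 (J.pred_eq p h)
          exact ⟨Sum.inl p, hpc, hp2⟩
      obtain ⟨m, hmD, hm⟩ := exists_min_of_acyclic hfin hne' htight
      have hmint : intensional {p | p ∈ P.cps} {f | f ∈ P.cfs} m := by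
        rcases m with p | f
        · exact hmD.1
        · exact hmD.1
      -- from minimality, J agrees with I on all strictly positive symbols of bodies
      have hagree : ∀ (G H : Formula σ), (G, H) ∈ P.formula.spImps → spIn m H →
          (∀ q ∈ G.spPreds, J.predI q = I.predI q) ∧
          (∀ g ∈ G.spFuncs, J.funcI g = I.funcI g) := by
        intro G H hGH hmH
        constructor
        · intro q hq
          by_cases hqc : q ∈ P.cps
          · by_contra hne2
            exact hm (Sum.inl q) ⟨hqc, hne2⟩
              ⟨hmint, hqc, ⟨(G, H), hGH, hmH, hq⟩⟩
          · exact J.pred_eq q hqc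
        · intro g hg
          by_cases hgc : g ∈ P.cfs
          · by_contra hne2
            exact hm (Sum.inr g) ⟨hgc, hne2⟩
              ⟨hmint, hgc, ⟨(G, H), hGH, hmH, hg⟩⟩
          · exact J.func_eq g hgc
      rcases m with p | f
      · -- the minimal disagreement is a predicate
        obtain ⟨hp, hdiff⟩ := hmD
        have hex : ∃ args, ¬ (J.predI p args ↔ I.predI p args) := by
          by_contra h
          push_neg at h
          exact hdiff (funext fun args => propext (h args))
        obtain ⟨args, hargs⟩ := hex
        have hJa : ¬ J.predI p args := fun hJ =>
          hargs ⟨fun _ => hle p args hJ, fun _ => hJ⟩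
        have hIa : I.predI p args := by
          by_contra hIa
          exact hargs ⟨fun hJ => absurd hJ hJa, fun hI2 => absurd hI2 hIa⟩
        have hGsat : (P.predDef p).Sat I (setArgs ν (σ.predAr p) args) := by
          apply (hCompP p hp _ (setArgs_not_mem ν _ args)).mp
          rw [setArgs_fin]
          exact hIa
        have hGH : ((P.predDef p), (Formula.pred p fun i => Term.var i.1))
            ∈ P.formula.spImps := by
          apply spImps_bigAnd_subset (List.mem_append_left _
            (List.mem_append_left _ (List.mem_map_of_mem hp)))
          rw [predRule, spImps_allN]
          exact Set.mem_insert _ _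
        have hag := hagree _ _ hGH rfl
        have hstarG := Formula.sat_starSat (J := J) _ _ hag.1 hag.2 hGsat
        have h2 := hstarP p hp _ (setArgs_not_mem ν _ args) hstarG
        rw [setArgs_fin] at h2
        exact hJa h2
      · -- the minimal disagreement is a function
        obtain ⟨hf, hdiff⟩ := hmD
        have hex : ∃ args, J.funcI f args ≠ I.funcI f args := by
          by_contra h
          push_neg at h
          exact hdiff (funext h)
        obtain ⟨args, hargs⟩ := hex
        have hGsat : (P.funcDef f).Sat I
            (setArgs2 ν (σ.funcAr f) args (I.funcI f args)) := by
          apply (hCompF f hf _ (setArgs2_not_mem ν _ args _)).mp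
          rw [setArgs2_fin, setArgs2_last]
        have hGH : ((P.funcDef f), (Formula.eq (.app f fun i => .var i.1)
            (.var (σ.funcAr f)))) ∈ P.formula.spImps := by
          apply spImps_bigAnd_subset (List.mem_append_left _
            (List.mem_append_right _ (List.mem_map_of_mem hf)))
          rw [funcRule, spImps_allN]
          exact Set.mem_insert _ _
        have hag := hagree _ _ hGH (Set.mem_union_left _ (Set.mem_insert _ _))
        have hstarG := Formula.sat_starSat (J := J) _ _ hag.1 hag.2 hGsat
        have h2 := hstarF f hf _ (setArgs2_not_mem ν _ args _) hstarG
        rw [setArgs2_fin, setArgs2_last] at h2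
        exact hargs h2


end ASPMT
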